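/- Let G be a bull-free, C5-free graph, let C be a shortest odd hole in G, and let v be a vertex of G not on C whose neighborhood on C is not contained in any two-edge subpath of C. Then there exist four consecutive vertices of C all adjacent to v. -/

import Mathlib

open SimpleGraph

/-- The bull: a triangle 0,1,2 with pendant edges 0–3 and 1–4. -/
def bull : SimpleGraph (Fin 5) :=
  SimpleGraph.fromRel (fun a b =>
    (a, b) ∈ [((0 : Fin 5), (1 : Fin 5)), (0, 2), (1, 2), (0, 3), (1, 4)])

/-- `G` has an induced copy of `H`. -/
def Contains {V W : Type*} (G : SimpleGraph V) (H : SimpleGraph W) : Prop :=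
  Nonempty (H ↪g G)

/-- `G` has an odd hole: an induced cycle of odd length at least 5. -/
def HasOddHole {V : Type*} (G : SimpleGraph V) : Prop :=
  ∃ n, 5 ≤ n ∧ Odd n ∧ Nonempty (SimpleGraph.cycleGraph n ↪g G)

/-- `e` exhibits a shortest odd hole in `G`. -/
def IsShortestOddHole {V : Type*} (G : SimpleGraph V) {k : ℕ}
    (_e : SimpleGraph.cycleGraph k ↪g G) : Prop :=
  5 ≤ k ∧ Odd k ∧ ∀ m, 5 ≤ m → Odd m → Nonempty (SimpleGraph.cycleGraph m ↪g G) → k ≤ m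

/-- The hole given by `e` is clean: the neighbours on the hole of any vertex off the hole
are contained in a two-edge path `i-1, i, i+1` of the hole. -/
def CleanHole {V : Type*} (G : SimpleGraph V) {k : ℕ}
    (e : SimpleGraph.cycleGraph k ↪g G) : Prop :=
  ∀ v : V, (∀ j, e j ≠ v) →
    ∃ i : Fin k, ∀ j, G.Adj v (e j) → j = i ∨ (SimpleGraph.cycleGraph k).Adj i j

/-- `G` is pure: it has no odd hole, or some shortest odd hole of `G` is clean. -/
def IsPure {V : Type*} (G : SimpleGraph V) : Prop :=
  ¬ HasOddHole G ∨
    ∃ (k : ℕ) (e : SimpleGraph.cycleGraph k ↪g G), IsShortestOddHole G e ∧ CleanHole G e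

/-- `p`, `c`, `a` form an anchor in `G`: `p` is an induced 4-vertex path, `c` is complete
to it, and `a` is anticomplete to it. -/
def IsAnchorIn {V : Type*} (G : SimpleGraph V) (p : Fin 4 → V) (c a : V) : Prop :=
  Function.Injective p ∧ (∀ i, c ≠ p i) ∧ (∀ i, a ≠ p i) ∧ a ≠ c ∧
  (∀ i j : Fin 4, G.Adj (p i) (p j) ↔ ((i : ℕ) + 1 = j ∨ (j : ℕ) + 1 = i)) ∧
  (∀ i, G.Adj c (p i)) ∧ (∀ i, ¬ G.Adj a (p i))

/-- `G` contains an anchor. -/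
def ContainsAnchor {V : Type*} (G : SimpleGraph V) : Prop :=
  ∃ p c a, IsAnchorIn G p c a

/-- `X` is a homogeneous set of `G`. -/
def IsHomogeneousSet {V : Type*} [Fintype V] (G : SimpleGraph V) (X : Finset V) : Prop :=
  1 < X.card ∧ X.card < Fintype.card V ∧
    ∀ v ∉ X, (∀ x ∈ X, G.Adj v x) ∨ (∀ x ∈ X, ¬ G.Adj v x)

section Helpers

open Fin.NatCast

lemma cyc_adj_iff {n : ℕ} (hn : 2 ≤ n) (a b : Fin n) :
    (cycleGraph n).Adj a b ↔ (a.val + 1 = b.val ∨ b.val + 1 = a.val ∨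
      (a.val = 0 ∧ b.val + 1 = n) ∨ (b.val = 0 ∧ a.val + 1 = n)) := by
  have ha := a.isLt
  have hb := b.isLt
  rw [cycleGraph_adj']
  have h1 : (a - b).val = ((n - b.val) + a.val) % n := by rw [Fin.sub_def]
  have h2 : (b - a).val = ((n - a.val) + b.val) % n := by rw [Fin.sub_def]
  rw [h1, h2]
  have e1 : ((n - b.val) + a.val) % n =
      if (n - b.val) + a.val < n then (n - b.val) + a.val else (n - b.val) + a.val - n := by
    split_ifs with h
    · exact Nat.mod_eq_of_lt h
    · rw [Nat.mod_eq_sub_mod (by omega), Nat.mod_eq_of_lt (by omega)]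
  have e2 : ((n - a.val) + b.val) % n =
      if (n - a.val) + b.val < n then (n - a.val) + b.val else (n - a.val) + b.val - n := by
    split_ifs with h
    · exact Nat.mod_eq_of_lt h
    · rw [Nat.mod_eq_sub_mod (by omega), Nat.mod_eq_of_lt (by omega)]
  rw [e1, e2]
  split_ifs <;> omega

variable {k : ℕ} [NeZero k]

lemma adj_shift (hk : 2 ≤ k) (x : Fin k) {c d : ℕ} (hc : c < k) (hd : d < k) :
    (cycleGraph k).Adj (x + (c : Fin k)) (x + (d : Fin k)) ↔
      (c + 1 = d ∨ d + 1 = c ∨ (c = 0 ∧ d + 1 = k) ∨ (d = 0 ∧ c + 1 = k)) := by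
  have htrans : (cycleGraph k).Adj (x + (c : Fin k)) (x + (d : Fin k)) ↔
      (cycleGraph k).Adj (c : Fin k) (d : Fin k) := by
    rw [cycleGraph_adj', cycleGraph_adj', add_sub_add_left_eq_sub, add_sub_add_left_eq_sub]
  rw [htrans, cyc_adj_iff hk, Fin.val_cast_of_lt hc, Fin.val_cast_of_lt hd]

lemma eq_shift (x : Fin k) {c d : ℕ} (hc : c < k) (hd : d < k) :
    x + (c : Fin k) = x + (d : Fin k) ↔ c = d := by
  rw [add_right_inj, Fin.ext_iff, Fin.val_cast_of_lt hc, Fin.val_cast_of_lt hd]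

lemma decomp (x j : Fin k) : ∃ s : ℕ, s < k ∧ j = x + (s : Fin k) :=
  ⟨(j - x).val, (j - x).isLt, by rw [Fin.cast_val_eq_self, add_comm, sub_add_cancel]⟩

lemma add_cast_add (z : Fin k) (c d : ℕ) :
    z + (c : Fin k) + (d : Fin k) = z + ((c + d : ℕ) : Fin k) := by
  rw [add_assoc, ← Nat.cast_add]

lemma natCast_fin_eq {c d : ℕ} (h : c % k = d % k) : (c : Fin k) = (d : Fin k) := by
  apply Fin.ext
  rw [Fin.val_natCast, Fin.val_natCast, h]

lemma arc_hole {V : Type*} {G : SimpleGraph V}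
    (e : cycleGraph k ↪g G) (hk : 7 ≤ k) {v : V} (hv : ∀ j, e j ≠ v)
    (y : Fin k) {g : ℕ} (hg3 : 3 ≤ g) (hgk : g + 4 ≤ k)
    (h0 : G.Adj v (e y)) (hg : G.Adj v (e (y + (g : Fin k))))
    (hint : ∀ s : ℕ, 0 < s → s < g → ¬ G.Adj v (e (y + (s : Fin k)))) :
    Nonempty (cycleGraph (g + 2) ↪g G) := by
  have hadj : ∀ a b : Fin k, G.Adj (e a) (e b) ↔ (cycleGraph k).Adj a b :=
    fun a b => e.map_adj_iff
  set f : Fin (g+2) → V := fun s => if s.val = g + 1 then v else e (y + (s.val : Fin k)) with hf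
  have hfv : ∀ s : Fin (g+2), s.val ≤ g → f s = e (y + ((s.val : ℕ) : Fin k)) := by
    intro s hs; simp only [hf]; rw [if_neg (by omega)]
  have hftop : ∀ s : Fin (g+2), s.val = g + 1 → f s = v := by
    intro s hs; simp only [hf]; rw [if_pos hs]
  have hvarc : ∀ b : Fin (g+2), b.val ≤ g →
      (G.Adj v (e (y + ((b.val : ℕ) : Fin k))) ↔ (b.val = 0 ∨ b.val = g)) := by
    intro b hb
    constructor
    · intro h
      by_contra hc
      push_neg at hc
      exact hint b.val (by omega) (by omega) h
    · rintro (h | h) <;> rw [h]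
      · simpa using h0
      · exact hg
  refine ⟨⟨⟨f, ?_⟩, ?_⟩⟩
  · intro a b hab
    by_cases ha : a.val = g+1 <;> by_cases hb : b.val = g+1
    · exact Fin.ext (ha.trans hb.symm)
    · rw [hftop a ha, hfv b (by omega)] at hab
      exact absurd hab.symm (hv _)
    · rw [hfv a (by omega), hftop b hb] at hab
      exact absurd hab (hv _)
    · rw [hfv a (by omega), hfv b (by omega)] at hab
      have h2 := (eq_shift y (c := a.val) (d := b.val) (by omega) (by omega)).mp
        (e.injective hab)
      exact Fin.ext h2
  · intro a b
    have hab2 := a.isLt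
    have hbb2 := b.isLt
    rw [cyc_adj_iff (by omega : 2 ≤ g + 2)]
    change G.Adj (f a) (f b) ↔ _
    by_cases ha : a.val = g+1 <;> by_cases hb : b.val = g+1
    · rw [hftop a ha, hftop b hb]
      constructor
      · intro h; exact absurd h (G.irrefl)
      · omega
    · rw [hftop a ha, hfv b (by omega)]
      rw [hvarc b (by omega)]
      omega
    · rw [hfv a (by omega), hftop b hb, G.adj_comm]
      rw [hvarc a (by omega)]
      omega
    · rw [hfv a (by omega), hfv b (by omega), hadj,
        adj_shift (by omega) y (by omega : a.val < k) (by omega : b.val < k)]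
      omega

instance : DecidableRel bull.Adj := fun a b =>
  inferInstanceAs (Decidable (a ≠ b ∧ (_ ∨ _)))

lemma bull_of_pattern {V : Type*} (G : SimpleGraph V) (p0 p1 p2 p3 p4 : V)
    (d01 : p0 ≠ p1) (d02 : p0 ≠ p2) (d03 : p0 ≠ p3) (d04 : p0 ≠ p4)
    (d12 : p1 ≠ p2) (d13 : p1 ≠ p3) (d14 : p1 ≠ p4)
    (d23 : p2 ≠ p3) (d24 : p2 ≠ p4) (d34 : p3 ≠ p4)
    (a01 : G.Adj p0 p1) (a02 : G.Adj p0 p2) (a12 : G.Adj p1 p2)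
    (a03 : G.Adj p0 p3) (a14 : G.Adj p1 p4)
    (n04 : ¬ G.Adj p0 p4) (n13 : ¬ G.Adj p1 p3) (n23 : ¬ G.Adj p2 p3)
    (n24 : ¬ G.Adj p2 p4) (n34 : ¬ G.Adj p3 p4) :
    Contains G bull := by
  have a10 := a01.symm
  have a20 := a02.symm
  have a21 := a12.symm
  have a30 := a03.symm
  have a41 := a14.symm
  have n40 : ¬ G.Adj p4 p0 := fun h => n04 h.symm
  have n31 : ¬ G.Adj p3 p1 := fun h => n13 h.symm
  have n32 : ¬ G.Adj p3 p2 := fun h => n23 h.symm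
  have n42 : ¬ G.Adj p4 p2 := fun h => n24 h.symm
  have n43 : ¬ G.Adj p4 p3 := fun h => n34 h.symm
  have n00 : ¬ G.Adj p0 p0 := G.irrefl
  have n11 : ¬ G.Adj p1 p1 := G.irrefl
  have n22 : ¬ G.Adj p2 p2 := G.irrefl
  have n33 : ¬ G.Adj p3 p3 := G.irrefl
  have n44 : ¬ G.Adj p4 p4 := G.irrefl
  refine ⟨⟨⟨![p0,p1,p2,p3,p4], ?_⟩, ?_⟩⟩
  · intro a b hab
    fin_cases a <;> fin_cases b <;> simp_all
  · intro a b
    fin_cases a <;> fin_cases b <;>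
      simp only [Matrix.cons_val_zero, Matrix.cons_val_one, Matrix.head_cons,
        Matrix.cons_val_two, Matrix.tail_cons, Matrix.cons_val_three, Matrix.cons_val_four,
        Matrix.cons_val_succ, Fin.isValue] <;>
      first
        | exact iff_of_true (by assumption) (by decide)
        | exact iff_of_false (by assumption) (by decide)

end Helpers

open Fin.NatCast in
theorem stmt_2 {V : Type*} (G : SimpleGraph V)
    (hbull : ¬ Contains G bull)
    (hC5 : ¬ Contains G (SimpleGraph.cycleGraph 5))
    (k : ℕ) [NeZero k] (e : SimpleGraph.cycleGraph k ↪g G)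
    (he : IsShortestOddHole G e)
    (v : V) (hv : ∀ j, e j ≠ v)
    (hnot : ¬ ∃ i : Fin k, ∀ j, G.Adj v (e j) → j = i ∨ (SimpleGraph.cycleGraph k).Adj i j) :
    ∃ i : Fin k, G.Adj v (e i) ∧ G.Adj v (e (i + 1)) ∧
      G.Adj v (e (i + 2)) ∧ G.Adj v (e (i + 3)) := by
  classical
  obtain ⟨h5, hodd, hmin⟩ := he
  have hkodd : k % 2 = 1 := Nat.odd_iff.mp hodd
  have hk7 : 7 ≤ k := by
    have h5ne : k ≠ 5 := by rintro rfl; exact hC5 ⟨e⟩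
    omega
  have two_le : 2 ≤ k := by omega
  have hadj : ∀ a b : Fin k, G.Adj (e a) (e b) ↔ (cycleGraph k).Adj a b :=
    fun a b => e.map_adj_iff
  have adjx : ∀ (x : Fin k) (c d : ℕ), c < k → d < k →
      (c + 1 = d ∨ d + 1 = c ∨ (c = 0 ∧ d + 1 = k) ∨ (d = 0 ∧ c + 1 = k)) →
      (cycleGraph k).Adj (x + (c : Fin k)) (x + (d : Fin k)) :=
    fun x c d hc hd h => (adj_shift two_le x hc hd).mpr h
  have ene : ∀ (x : Fin k) (c d : ℕ), c < k → d < k → c ≠ d →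
      e (x + (c : Fin k)) ≠ e (x + (d : Fin k)) :=
    fun x c d hc hd hne h => hne ((eq_shift x hc hd).mp (e.injective h))
  have eadj : ∀ (x : Fin k) (c d : ℕ), c < k → d < k →
      (c + 1 = d ∨ d + 1 = c ∨ (c = 0 ∧ d + 1 = k) ∨ (d = 0 ∧ c + 1 = k)) →
      G.Adj (e (x + (c : Fin k))) (e (x + (d : Fin k))) :=
    fun x c d hc hd h => (hadj _ _).mpr (adjx x c d hc hd h)
  have enadj : ∀ (x : Fin k) (c d : ℕ), c < k → d < k →
      ¬(c + 1 = d ∨ d + 1 = c ∨ (c = 0 ∧ d + 1 = k) ∨ (d = 0 ∧ c + 1 = k)) →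
      ¬ G.Adj (e (x + (c : Fin k))) (e (x + (d : Fin k))) :=
    fun x c d hc hd h hA => h ((adj_shift two_le x hc hd).mp ((hadj _ _).mp hA))
  push_neg at hnot
  -- Claim A: some edge of the hole has both ends adjacent to v
  have claimA : ∃ y : Fin k, G.Adj v (e y) ∧ G.Adj v (e (y + ((1:ℕ) : Fin k))) := by
    by_contra hne
    push_neg at hne
    obtain ⟨x, hx, -, -⟩ := hnot 0
    set P : ℕ → Prop := fun s => G.Adj v (e (x + (s : Fin k))) with hPdef
    have hP0 : P 0 := by
      show G.Adj v (e (x + ((0:ℕ) : Fin k)))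
      simpa using hx
    have hPk : P k := by
      show G.Adj v (e (x + ((k:ℕ) : Fin k)))
      rw [Fin.natCast_self, add_zero]
      exact hx
    have gap : ∀ c d : ℕ, c < d → d ≤ k → P c → P d →
        (∀ s, c < s → s < d → ¬ P s) → (d - c) % 2 = 0 := by
      intro c d hcd hdk hPc hPd hintr
      by_contra hodd2
      have hrange : d - c = 1 ∨ d - c = k ∨ d - c = k - 2 ∨
          (3 ≤ d - c ∧ (d - c) + 4 ≤ k) := by omega
      rcases hrange with h1 | hK | hK2 | ⟨hge, hle⟩
      · -- consecutive neighbours: contradicts hne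
        have hd : d = c + 1 := by omega
        subst hd
        refine hne (x + (c : Fin k)) hPc ?_
        rw [add_cast_add]
        exact hPd
      · -- the only neighbour is x: contradicts hnot
        have hc0 : c = 0 := by omega
        have hdk' : d = k := by omega
        obtain ⟨j, hjadj, hjne, hjnadj⟩ := hnot x
        obtain ⟨s, hs, rfl⟩ := decomp x j
        rcases Nat.eq_zero_or_pos s with rfl | hs0
        · exact hjne (by simp)
        · exact hintr s (by omega) (by omega) hjadj
      · -- neighbours local: contradicts hnot
        have hc2 : c ≤ 2 := by omega
        have hx0 : ∀ x : Fin k, x + ((0:ℕ) : Fin k) = x := by intro x; simp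
        interval_cases c
        · obtain ⟨j, hjadj, hjne, hjnadj⟩ := hnot (x + ((k-1 : ℕ) : Fin k))
          obtain ⟨s, hs, rfl⟩ := decomp x j
          have hsval : s = 0 ∨ s = k - 2 ∨ s = k - 1 := by
            by_contra hc
            push_neg at hc
            exact hintr s (by omega) (by omega) hjadj
          rcases hsval with rfl | rfl | rfl
          · exact hjnadj (adjx x (k-1) 0 (by omega) (by omega) (by omega))
          · exact hjnadj (adjx x (k-1) (k-2) (by omega) (by omega) (by omega))
          · exact hjne rfl
        · obtain ⟨j, hjadj, hjne, hjnadj⟩ := hnot x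
          obtain ⟨s, hs, rfl⟩ := decomp x j
          have hsval : s = 0 ∨ s = 1 ∨ s = k - 1 := by
            by_contra hc
            push_neg at hc
            exact hintr s (by omega) (by omega) hjadj
          rcases hsval with rfl | rfl | rfl
          · exact hjne (hx0 x)
          · exact hjnadj (by simpa using adjx x 0 1 (by omega) (by omega) (by omega))
          · exact hjnadj (by simpa using adjx x 0 (k-1) (by omega) (by omega) (by omega))
        · obtain ⟨j, hjadj, hjne, hjnadj⟩ := hnot (x + ((1 : ℕ) : Fin k))
          obtain ⟨s, hs, rfl⟩ := decomp x j
          have hsval : s = 0 ∨ s = 1 ∨ s = 2 := by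
            by_contra hc
            push_neg at hc
            exact hintr s (by omega) (by omega) hjadj
          rcases hsval with rfl | rfl | rfl
          · exact hjnadj (adjx x 1 0 (by omega) (by omega) (by omega))
          · exact hjne rfl
          · exact hjnadj (adjx x 1 2 (by omega) (by omega) (by omega))
      · -- a shorter odd hole: contradicts minimality
        set y := x + (c : Fin k) with hy
        have h0' : G.Adj v (e y) := hPc
        have hg' : G.Adj v (e (y + ((d - c : ℕ) : Fin k))) := by
          rw [hy, add_cast_add]
          have : c + (d - c) = d := by omega
          rw [this]
          exact hPd
        have hint' : ∀ s : ℕ, 0 < s → s < d - c → ¬ G.Adj v (e (y + (s : Fin k))) := by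
          intro s hs1 hs2
          rw [hy, add_cast_add]
          exact hintr (c + s) (by omega) (by omega)
        have hole := arc_hole e hk7 hv y hge hle h0' hg' hint'
        have := hmin (d - c + 2) (by omega) (by rw [Nat.odd_iff]; omega) hole
        omega
    have heven : ∀ d : ℕ, d ≤ k → P d → d % 2 = 0 := by
      intro d
      induction d using Nat.strong_induction_on with
      | _ d ih =>
        intro hdk hPd
        rcases Nat.eq_zero_or_pos d with rfl | hd0
        · rfl
        · have hPc : P (Nat.findGreatest P (d-1)) :=
            Nat.findGreatest_spec (m := 0) (by omega) hP0
          have hcle : Nat.findGreatest P (d-1) ≤ d - 1 := Nat.findGreatest_le _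
          have hgap := gap (Nat.findGreatest P (d-1)) d (by omega) hdk hPc hPd
            (fun s h1 h2 => Nat.findGreatest_is_greatest h1 (by omega))
          have := ih (Nat.findGreatest P (d-1)) (by omega) (by omega) hPc
          omega
    have := heven k le_rfl hPk
    omega
  -- rebase claim A: adjacency at offsets 1 and 2 from some base
  obtain ⟨y0, hy0, hy1⟩ := claimA
  have hbase : ∃ z : Fin k, G.Adj v (e (z + ((1:ℕ) : Fin k))) ∧
      G.Adj v (e (z + ((2:ℕ) : Fin k))) := by
    refine ⟨y0 + ((k-1 : ℕ) : Fin k), ?_, ?_⟩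
    · rw [add_cast_add, natCast_fin_eq (c := k-1+1) (d := 0)
        (by rw [show k-1+1 = k from by omega]; simp), Nat.cast_zero, add_zero]
      exact hy0
    · rw [add_cast_add, natCast_fin_eq (c := k-1+2) (d := 1)
        (by rw [show k-1+2 = 1+k from by omega, Nat.add_mod_right])]
      exact hy1
  obtain ⟨z0, hz1, hz2⟩ := hbase
  -- Claim B: three consecutive neighbours
  have claimB : ∃ z : Fin k, G.Adj v (e (z + ((1:ℕ) : Fin k))) ∧
      G.Adj v (e (z + ((2:ℕ) : Fin k))) ∧ G.Adj v (e (z + ((3:ℕ) : Fin k))) := by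
    by_cases h3 : G.Adj v (e (z0 + ((3:ℕ) : Fin k)))
    · exact ⟨z0, hz1, hz2, h3⟩
    by_cases h0 : G.Adj v (e (z0 + ((0:ℕ) : Fin k)))
    · refine ⟨z0 + ((k-1 : ℕ) : Fin k), ?_, ?_, ?_⟩
      · rw [add_cast_add, natCast_fin_eq (c := k-1+1) (d := 0)
          (by rw [show k-1+1 = k from by omega]; simp)]
        exact h0
      · rw [add_cast_add, natCast_fin_eq (c := k-1+2) (d := 1)
          (by rw [show k-1+2 = 1+k from by omega, Nat.add_mod_right])]
        exact hz1
      · rw [add_cast_add, natCast_fin_eq (c := k-1+3) (d := 2)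
          (by rw [show k-1+3 = 2+k from by omega, Nat.add_mod_right])]
        exact hz2
    · exfalso
      exact hbull (bull_of_pattern G
        (e (z0 + ((1:ℕ) : Fin k))) (e (z0 + ((2:ℕ) : Fin k))) v
        (e (z0 + ((0:ℕ) : Fin k))) (e (z0 + ((3:ℕ) : Fin k)))
        (ene z0 1 2 (by omega) (by omega) (by omega))
        (hv _)
        (ene z0 1 0 (by omega) (by omega) (by omega))
        (ene z0 1 3 (by omega) (by omega) (by omega))
        (hv _)
        (ene z0 2 0 (by omega) (by omega) (by omega))
        (ene z0 2 3 (by omega) (by omega) (by omega))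
        (Ne.symm (hv _))
        (Ne.symm (hv _))
        (ene z0 0 3 (by omega) (by omega) (by omega))
        (eadj z0 1 2 (by omega) (by omega) (by omega))
        hz1.symm
        hz2.symm
        (eadj z0 1 0 (by omega) (by omega) (by omega))
        (eadj z0 2 3 (by omega) (by omega) (by omega))
        (enadj z0 1 3 (by omega) (by omega) (by omega))
        (enadj z0 2 0 (by omega) (by omega) (by omega))
        h0
        h3
        (enadj z0 0 3 (by omega) (by omega) (by omega)))
  obtain ⟨z, hz1, hz2, hz3⟩ := claimB
  -- Claim C: four consecutive neighbours
  by_cases h0 : G.Adj v (e (z + ((0:ℕ) : Fin k)))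
  · refine ⟨z, ?_, ?_, ?_, ?_⟩
    · simpa using h0
    · simpa using hz1
    · simpa using hz2
    · simpa using hz3
  by_cases h4 : G.Adj v (e (z + ((4:ℕ) : Fin k)))
  · refine ⟨z + ((1:ℕ) : Fin k), ?_, ?_, ?_, ?_⟩
    · exact hz1
    · rw [show z + ((1:ℕ) : Fin k) + 1 = z + ((2:ℕ) : Fin k) from by open Fin.CommRing in (push_cast; ring)]
      exact hz2
    · rw [show z + ((1:ℕ) : Fin k) + 2 = z + ((3:ℕ) : Fin k) from by open Fin.CommRing in (push_cast; ring)]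
      exact hz3
    · rw [show z + ((1:ℕ) : Fin k) + 3 = z + ((4:ℕ) : Fin k) from by open Fin.CommRing in (push_cast; ring)]
      exact h4
  · exfalso
    obtain ⟨j, hjadj, hjne, hjnadj⟩ := hnot (z + ((2:ℕ) : Fin k))
    obtain ⟨s, hs, rfl⟩ := decomp z j
    have hs5 : 5 ≤ s := by
      rcases (by omega : s = 0 ∨ s = 1 ∨ s = 2 ∨ s = 3 ∨ s = 4 ∨ 5 ≤ s) with
        rfl | rfl | rfl | rfl | rfl | h
      · exact absurd hjadj h0
      · exact absurd (adjx z 2 1 (by omega) (by omega) (by omega)) hjnadj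
      · exact absurd rfl hjne
      · exact absurd (adjx z 2 3 (by omega) (by omega) (by omega)) hjnadj
      · exact absurd hjadj h4
      · exact h
    rcases (by omega : s ≤ k - 2 ∨ s = k - 1) with hsk | rfl
    · exact hbull (bull_of_pattern G
        (e (z + ((1:ℕ) : Fin k))) v (e (z + ((2:ℕ) : Fin k)))
        (e (z + ((0:ℕ) : Fin k))) (e (z + (s : Fin k)))
        (hv _)
        (ene z 1 2 (by omega) (by omega) (by omega))
        (ene z 1 0 (by omega) (by omega) (by omega))
        (ene z 1 s (by omega) (by omega) (by omega))
        (Ne.symm (hv _))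
        (Ne.symm (hv _))
        (Ne.symm (hv _))
        (ene z 2 0 (by omega) (by omega) (by omega))
        (ene z 2 s (by omega) (by omega) (by omega))
        (ene z 0 s (by omega) (by omega) (by omega))
        hz1.symm
        (eadj z 1 2 (by omega) (by omega) (by omega))
        hz2
        (eadj z 1 0 (by omega) (by omega) (by omega))
        hjadj
        (enadj z 1 s (by omega) (by omega) (by omega))
        h0
        (enadj z 2 0 (by omega) (by omega) (by omega))
        (enadj z 2 s (by omega) (by omega) (by omega))
        (enadj z 0 s (by omega) (by omega) (by omega)))
    · exact hbull (bull_of_pattern G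
        (e (z + ((3:ℕ) : Fin k))) v (e (z + ((2:ℕ) : Fin k)))
        (e (z + ((4:ℕ) : Fin k))) (e (z + ((k-1 : ℕ) : Fin k)))
        (hv _)
        (ene z 3 2 (by omega) (by omega) (by omega))
        (ene z 3 4 (by omega) (by omega) (by omega))
        (ene z 3 (k-1) (by omega) (by omega) (by omega))
        (Ne.symm (hv _))
        (Ne.symm (hv _))
        (Ne.symm (hv _))
        (ene z 2 4 (by omega) (by omega) (by omega))
        (ene z 2 (k-1) (by omega) (by omega) (by omega))
        (ene z 4 (k-1) (by omega) (by omega) (by omega))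
        hz3.symm
        (eadj z 3 2 (by omega) (by omega) (by omega))
        hz2
        (eadj z 3 4 (by omega) (by omega) (by omega))
        hjadj
        (enadj z 3 (k-1) (by omega) (by omega) (by omega))
        h4
        (enadj z 2 4 (by omega) (by omega) (by omega))
        (enadj z 2 (k-1) (by omega) (by omega) (by omega))
        (enadj z 4 (k-1) (by omega) (by omega) (by omega)))
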